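/- If P(x_1,...,x_n) is a real stable polynomial, then its partial derivative ∂P/∂x_1 is real stable or identically zero. -/

import Mathlib

open Polynomial Filter

lemma finSuccEquiv_pderiv_zero {R : Type*} [CommRing R] {n : ℕ}
    (g : MvPolynomial (Fin (n+1)) R) :
    MvPolynomial.finSuccEquiv R n (MvPolynomial.pderiv 0 g)
      = Polynomial.derivative (MvPolynomial.finSuccEquiv R n g) := by
  induction g using MvPolynomial.induction_on with
  | C a =>
    rw [MvPolynomial.pderiv_C, map_zero]
    have : (MvPolynomial.finSuccEquiv R n) (MvPolynomial.C a)
        = Polynomial.C (MvPolynomial.C a) := by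
      simp [MvPolynomial.finSuccEquiv_apply]
    rw [this, derivative_C]
  | add p q hp hq => simp [map_add, hp, hq]
  | mul_X p i hp =>
    rw [MvPolynomial.pderiv_mul, map_add, map_mul, map_mul, hp, map_mul, derivative_mul]
    rw [add_right_inj]
    induction i using Fin.cases with
    | zero =>
      rw [MvPolynomial.pderiv_X_self, MvPolynomial.finSuccEquiv_X_zero, derivative_X]
      simp
    | succ j =>
      rw [MvPolynomial.pderiv_X_of_ne (by simp [Fin.succ_ne_zero]),
        MvPolynomial.finSuccEquiv_X_succ, derivative_C]
      simp

lemma eval_derivative_list_prod (t₀ : ℂ) (l : List ℂ) (hl : ∀ r ∈ l, t₀ - r ≠ 0) :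
    Polynomial.eval t₀ (Polynomial.derivative ((l.map (fun r => X - C r)).prod))
      = Polynomial.eval t₀ ((l.map (fun r => X - C r)).prod)
        * (l.map (fun r => (t₀ - r)⁻¹)).sum := by
  induction l with
  | nil => simp
  | cons r l ih =>
    have hr : t₀ - r ≠ 0 := hl r (by simp)
    have ih' := ih (fun s hs => hl s (by simp [hs]))
    simp only [List.map_cons, List.prod_cons, List.sum_cons, derivative_mul, eval_add, eval_mul,
      derivative_sub, derivative_X, derivative_C, sub_zero, eval_one, one_mul, eval_sub, eval_X,
      eval_C, ih']
    field_simp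

lemma im_list_sum_neg (l : List ℂ) (hne : l ≠ []) (h : ∀ x ∈ l, x.im < 0) :
    (l.sum).im < 0 := by
  induction l with
  | nil => simp at hne
  | cons x l ih =>
    rcases eq_or_ne l [] with rfl | hl
    · simpa using h x (by simp)
    · have := ih hl (fun y hy => h y (by simp [hy]))
      have hx := h x (by simp)
      simp only [List.sum_cons, Complex.add_im]
      linarith

lemma gauss_lucas (q : Polynomial ℂ) (hq : ∀ t : ℂ, 0 < t.im → q.eval t ≠ 0)
    (hdeg : 1 ≤ q.natDegree) {t₀ : ℂ} (ht : 0 < t₀.im) : q.derivative.eval t₀ ≠ 0 := by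
  have hq0 : q ≠ 0 := by
    intro h
    exact hq Complex.I (by simp) (by simp [h])
  have hsplits : q.roots.card = q.natDegree :=
    (Polynomial.splits_iff_card_roots).mp (IsAlgClosed.splits q)
  have hfac : Polynomial.C q.leadingCoeff * (q.roots.map (fun r => X - C r)).prod = q :=
    Polynomial.C_leadingCoeff_mul_prod_multiset_X_sub_C hsplits
  set l : List ℂ := q.roots.toList with hldef
  have hlcoe : (l : Multiset ℂ) = q.roots := q.roots.coe_toList
  have hprodeq : (Multiset.map (fun r => X - C r) q.roots).prod
      = (l.map (fun r => X - C r)).prod := by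
    rw [← hlcoe, Multiset.map_coe, Multiset.prod_coe]
  have hfac' : q = Polynomial.C q.leadingCoeff * (l.map (fun r => X - C r)).prod := by
    rw [← hprodeq, hfac]
  have hroot_im : ∀ r ∈ l, r.im ≤ 0 := by
    intro r hr
    by_contra hcon
    push_neg at hcon
    have : q.eval r = 0 := by
      have : r ∈ q.roots := by rw [← hlcoe]; exact_mod_cast hr
      exact (Polynomial.isRoot_of_mem_roots this)
    exact hq r hcon this
  have hsub : ∀ r ∈ l, 0 < (t₀ - r).im := by
    intro r hr
    have := hroot_im r hr
    simp only [Complex.sub_im]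
    linarith
  have hsubne : ∀ r ∈ l, t₀ - r ≠ 0 := by
    intro r hr h
    have := hsub r hr
    rw [h] at this
    simp at this
  have hVne : Polynomial.eval t₀ ((l.map (fun r => X - C r)).prod) ≠ 0 := by
    rw [Polynomial.eval_list_prod]
    apply List.prod_ne_zero
    intro hmem
    simp only [List.map_map, List.mem_map, Function.comp] at hmem
    obtain ⟨r, hr, hrr⟩ := hmem
    exact hsubne r hr (by simpa using hrr)
  have hlne : l ≠ [] := by
    intro h
    have : q.natDegree = 0 := by
      rw [← hsplits, ← hlcoe, h]
      simp
    omega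
  have hsum : ((l.map (fun r => (t₀ - r)⁻¹)).sum).im < 0 := by
    apply im_list_sum_neg
    · simp [hlne]
    · intro x hx
      simp only [List.mem_map] at hx
      obtain ⟨r, hr, rfl⟩ := hx
      rw [Complex.inv_im]
      have h1 := hsub r hr
      have h2 : 0 < Complex.normSq (t₀ - r) := by
        rw [Complex.normSq_pos]
        exact hsubne r hr
      exact div_neg_of_neg_of_pos (by linarith) h2
  have hsumne : (l.map (fun r => (t₀ - r)⁻¹)).sum ≠ 0 := by
    intro h
    rw [h] at hsum
    simp at hsum
  have hlc : q.leadingCoeff ≠ 0 := Polynomial.leadingCoeff_ne_zero.mpr hq0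
  rw [hfac', Polynomial.derivative_C_mul, Polynomial.eval_mul, Polynomial.eval_C,
    eval_derivative_list_prod t₀ l hsubne]
  exact mul_ne_zero hlc (mul_ne_zero hVne hsumne)

lemma norm_multiset_prod' (s : Multiset ℂ) : ‖s.prod‖ = (s.map (fun z => ‖z‖)).prod := by
  induction s using Multiset.induction_on with
  | empty => simp
  | cons a s ih => simp [norm_mul, ih]

lemma hurwitz_bound (f : Polynomial ℂ) {δ : ℝ} (hδ : 0 < δ)
    (hf : ∀ w : ℂ, ‖w‖ < δ → f.eval w ≠ 0) {w₀ w₁ : ℂ} (h0 : ‖w₀‖ ≤ δ/2)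
    (h1 : ‖w₁‖ ≤ δ/2) :
    ‖f.eval w₁‖ ≤ 3 ^ f.natDegree * ‖f.eval w₀‖ := by
  have hf0 : f ≠ 0 := by
    intro h
    exact hf 0 (by simpa using hδ) (by simp [h])
  have hsplits : f.roots.card = f.natDegree :=
    (Polynomial.splits_iff_card_roots).mp (IsAlgClosed.splits f)
  have hfac : Polynomial.C f.leadingCoeff * (f.roots.map (fun r => X - C r)).prod = f :=
    Polynomial.C_leadingCoeff_mul_prod_multiset_X_sub_C hsplits
  have hroots : ∀ r ∈ f.roots, δ ≤ ‖r‖ := by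
    intro r hr
    by_contra hcon
    push_neg at hcon
    exact hf r hcon (Polynomial.isRoot_of_mem_roots hr)
  have keyeval : ∀ w : ℂ, ‖f.eval w‖
      = ‖f.leadingCoeff‖ * ((f.roots.map (fun r => ‖w - r‖)).prod) := by
    intro w
    conv_lhs => rw [← hfac]
    rw [Polynomial.eval_mul, Polynomial.eval_C, Polynomial.eval_multiset_prod, norm_mul]
    congr 1
    rw [Multiset.map_map]
    rw [norm_multiset_prod', Multiset.map_map]
    apply congrArg
    apply Multiset.map_congr rfl
    intro r _
    simp
  rw [keyeval w₀, keyeval w₁]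
  have hmono : (f.roots.map (fun r => ‖w₁ - r‖)).prod
      ≤ (f.roots.map (fun r => 3 * ‖w₀ - r‖)).prod := by
    apply Multiset.prod_map_le_prod_map₀
    · intro r _; positivity
    · intro r hr
      have hrn := hroots r hr
      have e1 : ‖w₁ - r‖ ≤ ‖r‖ + δ/2 := by
        calc ‖w₁ - r‖ ≤ ‖w₁‖ + ‖r‖ := norm_sub_le _ _
        _ ≤ ‖r‖ + δ/2 := by linarith
      have e2 : ‖r‖ - δ/2 ≤ ‖w₀ - r‖ := by
        have := norm_sub_norm_le r w₀
        have h' : ‖r - w₀‖ = ‖w₀ - r‖ := norm_sub_rev _ _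
        linarith
      linarith
  have hmul : (f.roots.map (fun r => 3 * ‖w₀ - r‖)).prod
      = 3 ^ f.natDegree * (f.roots.map (fun r => ‖w₀ - r‖)).prod := by
    rw [Multiset.prod_map_mul]
    congr 1
    rw [Multiset.map_const', Multiset.prod_replicate, hsplits]
  calc ‖f.leadingCoeff‖ * (f.roots.map (fun r => ‖w₁ - r‖)).prod
      ≤ ‖f.leadingCoeff‖ * (3 ^ f.natDegree * (f.roots.map (fun r => ‖w₀ - r‖)).prod) := by
        rw [← hmul]
        exact mul_le_mul_of_nonneg_left hmono (norm_nonneg _)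
    _ = 3 ^ f.natDegree * (‖f.leadingCoeff‖ * (f.roots.map (fun r => ‖w₀ - r‖)).prod) := by ring

lemma mv_aeval_eq_eval {σ : Type*} (g : σ → ℂ) (p : MvPolynomial σ ℂ) :
    MvPolynomial.aeval g p = MvPolynomial.eval g p := rfl

lemma top_coeff_ne_zero {n : ℕ} (Pc : MvPolynomial (Fin (n+1)) ℂ)
    (hst : ∀ y : Fin (n+1) → ℂ, (∀ i, 0 < (y i).im) → MvPolynomial.eval y Pc ≠ 0)
    (z' : Fin n → ℂ) (hz' : ∀ j, 0 < (z' j).im) :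
    MvPolynomial.eval z'
      ((MvPolynomial.finSuccEquiv ℂ n Pc).coeff (MvPolynomial.finSuccEquiv ℂ n Pc).natDegree)
      ≠ 0 := by
  set Qc := MvPolynomial.finSuccEquiv ℂ n Pc with hQc
  set d := Qc.natDegree with hd
  set T := Qc.coeff d with hTdef
  have hPc0 : Pc ≠ 0 := by
    intro h
    exact hst (fun _ => Complex.I) (fun i => by simp) (by simp [h])
  have hQc0 : Qc ≠ 0 := by
    intro h
    exact hPc0 ((map_eq_zero_iff _ (MvPolynomial.finSuccEquiv ℂ n).injective).mp h)
  have hT : T ≠ 0 := by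
    rw [hTdef, hd, ← Polynomial.leadingCoeff]
    exact Polynomial.leadingCoeff_ne_zero.mpr hQc0
  intro h0
  -- choose a direction v
  obtain ⟨v, hv⟩ : ∃ v : Fin n → ℂ,
      (MvPolynomial.aeval (fun j => Polynomial.C (z' j) + Polynomial.C (v j) * Polynomial.X) T
        : Polynomial ℂ) ≠ 0 := by
    by_contra hall
    push_neg at hall
    apply hT
    apply MvPolynomial.funext
    intro y
    have h1 := congrArg (Polynomial.aeval (1 : ℂ)) (hall (fun j => y j - z' j))
    rw [map_zero, MvPolynomial.comp_aeval_apply] at h1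
    simp only [map_add, map_mul, Polynomial.aeval_C, Polynomial.aeval_X,
      Algebra.algebraMap_self, RingHom.id_apply, mul_one] at h1
    rw [show (fun j => z' j + (y j - z' j)) = y from funext fun j => by ring] at h1
    rw [mv_aeval_eq_eval] at h1
    simpa using h1
  set line : Fin n → Polynomial ℂ :=
    fun j => Polynomial.C (z' j) + Polynomial.C (v j) * Polynomial.X with hline
  set H : Polynomial ℂ := MvPolynomial.aeval line T with hH
  have hevalline : ∀ (w : ℂ) (c : MvPolynomial (Fin n) ℂ),
      Polynomial.eval w (MvPolynomial.aeval line c)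
        = MvPolynomial.eval (fun j => z' j + w * v j) c := by
    intro w c
    have := MvPolynomial.comp_aeval_apply (f := line) (Polynomial.aeval w) c
    rw [show (Polynomial.aeval w : Polynomial ℂ →ₐ[ℂ] ℂ) (MvPolynomial.aeval line c)
        = Polynomial.eval w (MvPolynomial.aeval line c) from rfl] at this
    rw [this]
    simp only [hline, map_add, map_mul, Polynomial.aeval_C, Polynomial.aeval_X,
      Algebra.algebraMap_self, RingHom.id_apply]
    rw [mv_aeval_eq_eval,
      show (fun i => z' i + v i * w) = (fun j => z' j + w * v j) from funext fun j => by ring]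
  have heval0 : H.eval 0 = 0 := by
    rw [hH, hevalline]
    simpa using h0
  -- radius
  obtain ⟨dl, hdlpos, hdl⟩ : ∃ dl > (0:ℝ), ∀ w : ℂ, ‖w‖ < dl →
      ∀ j, 0 < (z' j + w * v j).im := by
    have hU : IsOpen {w : ℂ | ∀ j, 0 < (z' j + w * v j).im} := by
      rw [Set.setOf_forall]
      apply isOpen_iInter_of_finite
      intro j
      apply isOpen_lt continuous_const
      exact Complex.continuous_im.comp (by fun_prop)
    have h0U : (0:ℂ) ∈ {w : ℂ | ∀ j, 0 < (z' j + w * v j).im} := by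
      simpa using hz'
    obtain ⟨ε, hε, hball⟩ := Metric.isOpen_iff.mp hU 0 h0U
    refine ⟨ε, hε, fun w hw j => ?_⟩
    exact hball (by simpa [Metric.mem_ball, dist_zero_right] using hw) j
  -- coefficients along the line
  set A : ℕ → Polynomial ℂ := fun k => MvPolynomial.aeval line (Qc.coeff k) with hA
  have hAd : A d = H := rfl
  -- evaluation identity
  have hkey : ∀ (a : ℂ) (u : Fin n → ℂ), MvPolynomial.eval (Fin.cons a u) Pc
      = ∑ k ∈ Finset.range (d+1), MvPolynomial.eval u (Qc.coeff k) * a ^ k := by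
    intro a u
    rw [MvPolynomial.eval_eq_eval_mv_eval']
    rw [Polynomial.eval_eq_sum_range' (lt_of_le_of_lt Polynomial.natDegree_map_le (Nat.lt_succ_self d))]
    exact Finset.sum_congr rfl fun k _ => by rw [Polynomial.coeff_map]
  -- the approximating polynomials
  set μ : ℕ → ℂ := fun m => ((m+1 : ℕ) : ℂ) * Complex.I with hμ
  have hμ_im : ∀ m, 0 < (μ m).im := by
    intro m
    simp [hμ, Complex.mul_im]
    positivity
  have hμ_norm : ∀ m, ‖μ m‖ = (m+1 : ℕ) := by
    intro m
    rw [hμ, norm_mul, Complex.norm_I, mul_one, Complex.norm_natCast]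
  have hμ_ne : ∀ m, μ m ≠ 0 := by
    intro m h
    have := hμ_im m
    rw [h] at this
    simp at this
  set f : ℕ → Polynomial ℂ :=
    fun m => ∑ k ∈ Finset.range (d+1), Polynomial.C ((μ m) ^ k) * A k with hf
  have hfeval : ∀ m w, (f m).eval w
      = MvPolynomial.eval (Fin.cons (μ m) (fun j => z' j + w * v j)) Pc := by
    intro m w
    rw [hkey]
    rw [hf]
    rw [Polynomial.eval_finset_sum]
    refine Finset.sum_congr rfl fun k _ => ?_
    rw [Polynomial.eval_mul, Polynomial.eval_C, hA, hevalline]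
    ring
  have hfne : ∀ m, ∀ w : ℂ, ‖w‖ < dl → (f m).eval w ≠ 0 := by
    intro m w hw
    rw [hfeval]
    apply hst
    intro i
    induction i using Fin.cases with
    | zero => simpa using hμ_im m
    | succ j => simpa using hdl w hw j
  -- uniform degree bound
  set N : ℕ := Finset.sup (Finset.range (d+1)) (fun k => (A k).natDegree) with hN
  have hdegf : ∀ m, (f m).natDegree ≤ N := by
    intro m
    apply Polynomial.natDegree_sum_le_of_forall_le
    intro k hk
    exact le_trans (Polynomial.natDegree_C_mul_le _ _) (Finset.le_sup (f := fun k => (A k).natDegree) hk)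
  -- pick a point where H is nonzero
  obtain ⟨wst, hwst_norm, hwst_ne⟩ : ∃ w : ℂ, ‖w‖ ≤ dl/2 ∧ H.eval w ≠ 0 := by
    have hroots : {x : ℂ | H.IsRoot x}.Finite := Polynomial.finite_setOf_isRoot hv
    have hS : (Set.Ioo (0:ℝ) (dl/2)).Infinite := Set.Ioo_infinite (by linarith)
    have hS' : ((fun r : ℝ => (r:ℂ)) '' (Set.Ioo (0:ℝ) (dl/2))).Infinite :=
      hS.image (Complex.ofReal_injective.injOn)
    obtain ⟨w, hw⟩ := (hS'.diff hroots).nonempty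
    obtain ⟨⟨r, hr, rfl⟩, hw2⟩ := hw
    refine ⟨r, ?_, hw2⟩
    rw [Complex.norm_real, Real.norm_eq_abs, abs_of_pos hr.1]
    exact le_of_lt hr.2
  -- Hurwitz bound for each m
  have hineq : ∀ m : ℕ, ‖(μ m)⁻¹ ^ d * (f m).eval wst‖
      ≤ 3 ^ N * ‖(μ m)⁻¹ ^ d * (f m).eval 0‖ := by
    intro m
    have h1 : ‖(f m).eval wst‖ ≤ 3 ^ (f m).natDegree * ‖(f m).eval 0‖ :=
      hurwitz_bound (f m) hdlpos (hfne m) (by simp; positivity) hwst_norm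
    have h2 : (3:ℝ) ^ (f m).natDegree ≤ 3 ^ N :=
      pow_le_pow_right₀ (by norm_num) (hdegf m)
    have h3 : ‖(f m).eval wst‖ ≤ 3 ^ N * ‖(f m).eval 0‖ :=
      le_trans h1 (mul_le_mul_of_nonneg_right h2 (norm_nonneg _))
    rw [norm_mul, norm_mul]
    calc ‖(μ m)⁻¹ ^ d‖ * ‖(f m).eval wst‖
        ≤ ‖(μ m)⁻¹ ^ d‖ * (3 ^ N * ‖(f m).eval 0‖) :=
          mul_le_mul_of_nonneg_left h3 (norm_nonneg _)
      _ = 3 ^ N * (‖(μ m)⁻¹ ^ d‖ * ‖(f m).eval 0‖) := by ring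
  -- limits
  have hμinv : Filter.Tendsto (fun m : ℕ => (μ m)⁻¹) Filter.atTop (nhds 0) := by
    rw [tendsto_zero_iff_norm_tendsto_zero]
    have : ∀ m : ℕ, ‖(μ m)⁻¹‖ = 1 / ((m:ℝ)+1) := by
      intro m
      rw [norm_inv, hμ_norm]
      push_cast
      ring
    rw [funext this]
    exact tendsto_one_div_add_atTop_nhds_zero_nat
  have hlim : ∀ x : ℂ, Filter.Tendsto (fun m : ℕ => (μ m)⁻¹ ^ d * (f m).eval x)
      Filter.atTop (nhds (H.eval x)) := by
    intro x
    have hrw : ∀ m, (μ m)⁻¹ ^ d * (f m).eval x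
        = H.eval x + ∑ k ∈ Finset.range d, (μ m)⁻¹ ^ (d - k) * (A k).eval x := by
      intro m
      have hfx : (f m).eval x = ∑ k ∈ Finset.range (d+1), (μ m) ^ k * (A k).eval x := by
        rw [hf, Polynomial.eval_finset_sum]
        exact Finset.sum_congr rfl fun k _ => by rw [Polynomial.eval_mul, Polynomial.eval_C]
      rw [hfx, Finset.sum_range_succ, mul_add, Finset.mul_sum]
      have hdd : (μ m)⁻¹ ^ d * ((μ m) ^ d * (A d).eval x) = H.eval x := by
        rw [← mul_assoc, ← mul_pow, inv_mul_cancel₀ (hμ_ne m), one_pow, one_mul, hAd]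
      rw [hdd]
      rw [add_comm]
      congr 1
      refine Finset.sum_congr rfl fun k hk => ?_
      have hkd : k ≤ d := le_of_lt (Finset.mem_range.mp hk)
      rw [← mul_assoc]
      congr 1
      have : d = (d - k) + k := by omega
      rw [this, pow_add, mul_assoc, ← mul_pow, inv_mul_cancel₀ (hμ_ne m), one_pow, mul_one]
      congr 1
      omega
    rw [funext hrw]
    have : Filter.Tendsto
        (fun m : ℕ => ∑ k ∈ Finset.range d, (μ m)⁻¹ ^ (d - k) * (A k).eval x)
        Filter.atTop (nhds 0) := by
      have : Filter.Tendsto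
          (fun m : ℕ => ∑ k ∈ Finset.range d, (μ m)⁻¹ ^ (d - k) * (A k).eval x)
          Filter.atTop (nhds (∑ k ∈ Finset.range d, 0)) := by
        apply tendsto_finset_sum
        intro k hk
        have hdk : d - k ≠ 0 := by
          have := Finset.mem_range.mp hk
          omega
        have h1 : Filter.Tendsto (fun m : ℕ => (μ m)⁻¹ ^ (d - k))
            Filter.atTop (nhds 0) := by
          have := hμinv.pow (d - k)
          rwa [zero_pow hdk] at this
        simpa using h1.mul_const ((A k).eval x)
      simpa using this
    simpa using (tendsto_const_nhds.add this : Filter.Tendsto _ _ (nhds (H.eval x + 0)))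
  -- conclude
  have hfinal : ‖H.eval wst‖ ≤ 3 ^ N * ‖H.eval 0‖ :=
    le_of_tendsto_of_tendsto' (hlim wst).norm (((hlim 0).norm).const_mul _) hineq
  rw [heval0] at hfinal
  simp only [norm_zero, mul_zero] at hfinal
  exact hwst_ne (norm_le_zero_iff.mp hfinal)

/-- The partial derivative of a real stable polynomial is real stable or zero. -/
theorem stmt_2 (n : ℕ) (P : MvPolynomial (Fin (n + 1)) ℝ)
    (hP : ∀ z : Fin (n + 1) → ℂ, (∀ i, 0 < (z i).im) → MvPolynomial.aeval z P ≠ 0) :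
    MvPolynomial.pderiv 0 P = 0 ∨
    (∀ z : Fin (n + 1) → ℂ, (∀ i, 0 < (z i).im) →
      MvPolynomial.aeval z (MvPolynomial.pderiv 0 P) ≠ 0) := by
  by_cases h : MvPolynomial.pderiv 0 P = 0
  · exact Or.inl h
  · right
    intro z hz hzero
    set Pc : MvPolynomial (Fin (n+1)) ℂ := MvPolynomial.map (algebraMap ℝ ℂ) P with hPcdef
    have hevalPc : ∀ (g : MvPolynomial (Fin (n+1)) ℝ) (y : Fin (n+1) → ℂ),
        MvPolynomial.eval y (MvPolynomial.map (algebraMap ℝ ℂ) g) = MvPolynomial.aeval y g := by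
      intro g y
      rw [MvPolynomial.eval_map, ← MvPolynomial.aeval_def]
    have hst : ∀ y : Fin (n+1) → ℂ, (∀ i, 0 < (y i).im) → MvPolynomial.eval y Pc ≠ 0 := by
      intro y hy
      rw [hPcdef, hevalPc]
      exact hP y hy
    have hpd : MvPolynomial.pderiv 0 Pc = MvPolynomial.map (algebraMap ℝ ℂ) (MvPolynomial.pderiv 0 P) := by
      rw [hPcdef, MvPolynomial.pderiv_map]
    have hD' : MvPolynomial.pderiv 0 Pc ≠ 0 := by
      rw [hpd]
      intro hcon
      exact h (MvPolynomial.map_injective (algebraMap ℝ ℂ)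
        (fun a b => by exact_mod_cast id) (by simpa using hcon))
    have hzero' : MvPolynomial.eval z (MvPolynomial.pderiv 0 Pc) = 0 := by
      rw [hpd, hevalPc]
      exact hzero
    set Qc := MvPolynomial.finSuccEquiv ℂ n Pc with hQc
    set d := Qc.natDegree with hd
    have hdpos : 1 ≤ d := by
      by_contra hcon
      push_neg at hcon
      have hd0 : Qc.natDegree = 0 := by omega
      have : Polynomial.derivative Qc = 0 := by
        rw [Polynomial.eq_C_of_natDegree_eq_zero hd0, Polynomial.derivative_C]
      have : MvPolynomial.finSuccEquiv ℂ n (MvPolynomial.pderiv 0 Pc) = 0 := by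
        rw [finSuccEquiv_pderiv_zero, ← hQc, this]
      exact hD' ((map_eq_zero_iff _ (MvPolynomial.finSuccEquiv ℂ n).injective).mp this)
    set z' : Fin n → ℂ := fun j => z j.succ with hz'def
    have hz' : ∀ j, 0 < (z' j).im := fun j => hz j.succ
    have hzcons : Fin.cons (z 0) z' = z := Fin.cons_self_tail z
    set q : Polynomial ℂ := Polynomial.map (MvPolynomial.eval z') Qc with hq
    have hqeval : ∀ t : ℂ, q.eval t = MvPolynomial.eval (Fin.cons t z') Pc := by
      intro t
      rw [MvPolynomial.eval_eq_eval_mv_eval', hq, hQc]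
    have hqne : ∀ t : ℂ, 0 < t.im → q.eval t ≠ 0 := by
      intro t ht
      rw [hqeval]
      apply hst
      intro i
      induction i using Fin.cases with
      | zero => simpa using ht
      | succ j => simpa using hz' j
    have hqdeg : 1 ≤ q.natDegree := by
      have hcoeff : q.coeff d ≠ 0 := by
        rw [hq, Polynomial.coeff_map]
        exact top_coeff_ne_zero Pc hst z' hz'
      exact le_trans hdpos (Polynomial.le_natDegree_of_ne_zero hcoeff)
    have hder : q.derivative.eval (z 0) = 0 := by
      rw [hq, Polynomial.derivative_map, ← finSuccEquiv_pderiv_zero,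
        ← MvPolynomial.eval_eq_eval_mv_eval', hzcons]
      exact hzero'
    exact gauss_lucas q hqne hqdeg (hz 0) hder
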